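/- arXiv:0910.5863 — 5 statements merged into one kernel-verified Lean document; each statement's English description precedes it below -/
import Mathlib

section
/- Let W̃ be a finite-dimensional real vector space equipped with a symmetric positive definite bilinear form a, let Ŵ be a subspace of W̃ with {0} ≠ Ŵ and Ŵ ≠ W̃, and let Q : W̃ → W̃ be a linear map with range contained in Ŵ и such that Q u = u for every u ∈ Ŵ (so Q is a projection of W̃ onto Ŵ). For every u ∈ Ŵ there is a unique w ∈ W̃ such that a(w, z) = a(u, Q z) for all z ∈ W̃; define the preconditioned BDDC operator T : Ŵ → Ŵ by T u = Q w. Then every (real) eigenvalue λ of T satisfies 1 ≤ λ ≤ ω, where ω = sup { a(w − Q w, w − Q w) / a(w, w) : w ∈ W̃, w ≠ 0 }. -/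
/-- Abstract BDDC condition number bound (Theorem 1): the eigenvalues of the
preconditioned BDDC operator `T u = Q w`, where `a (w, z) = a (u, Q z)` for all `z`,
satisfy `1 ≤ λ ≤ ω` with `ω = sup { a(w - Qw, w - Qw) / a(w,w) : w ≠ 0 }`. -/
theorem stmt_0 {W : Type*} [AddCommGroup W] [Module ℝ W] [FiniteDimensional ℝ W]
    (a : W →ₗ[ℝ] W →ₗ[ℝ] ℝ)
    (hasymm : ∀ u v : W, a u v = a v u)
    (hapos : ∀ u : W, u ≠ 0 → 0 < a u u)
    (What : Submodule ℝ W) (hWbot : What ≠ ⊥) (hWtop : What ≠ ⊤)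
    (Q : W →ₗ[ℝ] W)
    (hQrange : ∀ v : W, Q v ∈ What)
    (hQfix : ∀ u ∈ What, Q u = u) :
    (∀ u ∈ What, ∃! w : W, ∀ z : W, a w z = a u (Q z)) ∧
    ∀ T : W →ₗ[ℝ] W,
      (∀ u ∈ What, ∀ w : W, (∀ z : W, a w z = a u (Q z)) → T u = Q w) →
      ∀ (lam : ℝ) (u : W), u ∈ What → u ≠ 0 → T u = lam • u →
        1 ≤ lam ∧
        lam ≤ sSup {r : ℝ | ∃ w : W, w ≠ 0 ∧ r = a (w - Q w) (w - Q w) / a w w} := by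
  have ha0 : ∀ x : W, 0 ≤ a x x := by
    intro x
    rcases eq_or_ne x 0 with h | h
    · simp [h]
    · exact le_of_lt (hapos x h)
  letI core : InnerProductSpace.Core ℝ W :=
  { inner := fun x y => a x y
    conj_inner_symm := fun x y => by simpa using hasymm y x
    re_inner_nonneg := fun x => by simpa using ha0 x
    definite := fun x hx => by
      by_contra h
      exact absurd hx (ne_of_gt (hapos x h))
    add_left := fun x y z => by simp
    smul_left := fun x y r => by simp }
  letI : NormedAddCommGroup W := core.toNormedAddCommGroup
  letI : InnerProductSpace ℝ W := InnerProductSpace.ofCore core.toCore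
  haveI : CompleteSpace W := FiniteDimensional.complete ℝ W
  have hinn : ∀ x y : W, (inner ℝ x y : ℝ) = a x y := fun _ _ => rfl
  -- uniqueness helper
  have huniq : ∀ w w' : W, (∀ z : W, a w z = a w' z) → w = w' := by
    intro w w' h
    by_contra hne
    have hd : w - w' ≠ 0 := sub_ne_zero.mpr hne
    have h0 : a (w - w') (w - w') = 0 := by
      have := h (w - w')
      simp only [map_sub, LinearMap.sub_apply] at *
      linarith
    exact absurd h0 (ne_of_gt (hapos _ hd))
  -- existence and uniqueness
  have hex : ∀ u ∈ What, ∃! w : W, ∀ z : W, a w z = a u (Q z) := by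
    intro u _
    set ℓ : W →L[ℝ] ℝ := LinearMap.toContinuousLinearMap ((a u).comp Q) with hℓ
    refine ⟨(InnerProductSpace.toDual ℝ W).symm ℓ, fun z => ?_, fun w' hw' => ?_⟩
    · have h1 : (inner ℝ ((InnerProductSpace.toDual ℝ W).symm ℓ) z : ℝ) = ℓ z :=
        InnerProductSpace.toDual_symm_apply
      rw [hinn] at h1
      simpa [hℓ] using h1
    · refine huniq _ _ fun z => ?_
      rw [hw' z]
      have h1 : (inner ℝ ((InnerProductSpace.toDual ℝ W).symm ℓ) z : ℝ) = ℓ z :=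
        InnerProductSpace.toDual_symm_apply
      rw [hinn] at h1
      simpa [hℓ] using h1.symm
  refine ⟨hex, ?_⟩
  intro T hT lam u hu hu0 heig
  obtain ⟨w, hw, -⟩ := hex u hu
  have hQw : Q w = lam • u := by rw [← hT u hu w hw, heig]
  have huu : 0 < a u u := hapos u hu0
  have hwu : a w u = a u u := by rw [hw u, hQfix u hu]
  have hww : a w w = lam * a u u := by
    rw [hw w, hQw]; simp [smul_smul]
  -- lower bound
  have hCS : a w u * a w u ≤ a w w * a u u := by
    have := real_inner_mul_inner_self_le w u
    rw [hinn, hinn, hinn] at this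
    exact this
  have hlow : 1 ≤ lam := by
    rw [hwu, hww] at hCS
    nlinarith [mul_pos huu huu]
  refine ⟨hlow, ?_⟩
  -- the sup set
  set S : Set ℝ := {r : ℝ | ∃ w : W, w ≠ 0 ∧ r = a (w - Q w) (w - Q w) / a w w} with hS
  -- boundedness above
  have hbdd : BddAbove S := by
    set Qc : W →L[ℝ] W := LinearMap.toContinuousLinearMap Q with hQc
    refine ⟨‖ContinuousLinearMap.id ℝ W - Qc‖ ^ 2, fun r hr => ?_⟩
    obtain ⟨v, hv0, rfl⟩ := hr
    have hnorm : ∀ x : W, a x x = ‖x‖ ^ 2 := by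
      intro x
      rw [← hinn]
      exact real_inner_self_eq_norm_sq x
    have h1 : ‖v - Q v‖ ≤ ‖ContinuousLinearMap.id ℝ W - Qc‖ * ‖v‖ := by
      have := (ContinuousLinearMap.id ℝ W - Qc).le_opNorm v
      simpa [hQc] using this
    have hv2 : 0 < ‖v‖ := norm_pos_iff.mpr hv0
    rw [hnorm, hnorm, div_le_iff₀ (by positivity)]
    have h2 : ‖v - Q v‖ ^ 2 ≤ (‖ContinuousLinearMap.id ℝ W - Qc‖ * ‖v‖) ^ 2 := by
      apply sq_le_sq' _ h1
      have : 0 ≤ ‖ContinuousLinearMap.id ℝ W - Qc‖ * ‖v‖ := by positivity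
      linarith [norm_nonneg (v - Q v)]
    calc ‖v - Q v‖ ^ 2 ≤ (‖ContinuousLinearMap.id ℝ W - Qc‖ * ‖v‖) ^ 2 := h2
      _ = ‖ContinuousLinearMap.id ℝ W - Qc‖ ^ 2 * ‖v‖ ^ 2 := by ring
  rcases lt_or_eq_of_le hlow with hlt | heq
  · -- lam > 1 : use v = w - u
    have huw : a u w = a w u := hasymm u w
    have hvv : a (w - u) (w - u) = (lam - 1) * a u u := by
      simp only [map_sub, LinearMap.sub_apply]
      rw [huw, hwu, hww]; ring
    have hv0 : (w - u) ≠ 0 := by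
      intro h
      rw [h] at hvv
      simp only [map_zero, LinearMap.zero_apply] at hvv
      nlinarith
    have hQv : (w - u) - Q (w - u) = w - lam • u := by
      rw [map_sub, hQw, hQfix u hu]
      abel
    have hnum : a ((w - u) - Q (w - u)) ((w - u) - Q (w - u)) = lam * (lam - 1) * a u u := by
      rw [hQv]
      simp only [map_sub, LinearMap.sub_apply, map_smul, LinearMap.smul_apply, smul_eq_mul]
      rw [huw, hwu, hww]; ring
    have hmem : lam ∈ S := by
      refine ⟨w - u, hv0, ?_⟩
      have h1 : (lam - 1) * a u u ≠ 0 := by nlinarith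
      rw [hnum, hvv, mul_assoc, mul_div_assoc, div_self h1, mul_one]
    exact le_csSup hbdd hmem
  · -- lam = 1 : use a vector a-orthogonal to What
    have hne : Whatᗮ ≠ ⊥ := fun h => hWtop (Submodule.orthogonal_eq_bot_iff.mp h)
    obtain ⟨v, hvmem, hv0⟩ := (Submodule.ne_bot_iff _).mp hne
    have horth : a (Q v) v = 0 := by
      rw [← hinn]
      exact (Submodule.mem_orthogonal What v).mp hvmem (Q v) (hQrange v)
    have horth' : a v (Q v) = 0 := by rw [hasymm]; exact horth
    have hvv : 0 < a v v := hapos v hv0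
    have hnum : a v v ≤ a (v - Q v) (v - Q v) := by
      simp only [map_sub, LinearMap.sub_apply]
      rw [horth, horth']
      have := ha0 (Q v)
      linarith
    have hmem : a (v - Q v) (v - Q v) / a v v ∈ S := ⟨v, hv0, rfl⟩
    have h1r : (1 : ℝ) ≤ a (v - Q v) (v - Q v) / a v v :=
      (one_le_div hvv).mpr hnum
    rw [← heq]
    exact le_trans h1r (le_csSup hbdd hmem)
end

section
/- Let W be a finite-dimensional real vector space, let A be a symmetric bilinear form on W, and let U_I ⊆ U ⊆ W be subspaces. Let P : W → W be a linear map whose range is contained in U_I and which satisfies A(v − P v, z) = 0 for all v ∈ W and all z ∈ U_I, and let E : W → W be a linear map with E u = u for all u ∈ U. Let w₀ ∈ W satisfy P w₀ = 0. Then the linear functional L(w) := A( w₀ − (I−P)E w₀ , w − (I−P)E w ) vanishes on U, i.e. L(w) = 0 for every w ∈ U. -/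
/-- Lemma 5: the adaptively generated constraint functional
`L(w) = A(w₀ - (I-P)E w₀, w - (I-P)E w)`, built from a discrete harmonic
vector `w₀` (i.e. `P w₀ = 0`), vanishes on the subspace `U` of continuous
functions. -/
theorem stmt_9 {W : Type*} [AddCommGroup W] [Module ℝ W] [FiniteDimensional ℝ W]
    (A : W →ₗ[ℝ] W →ₗ[ℝ] ℝ)
    (hAsymm : ∀ u v : W, A u v = A v u)
    (UI U : Submodule ℝ W) (hUIU : UI ≤ U)
    (P : W →ₗ[ℝ] W) (hPrange : ∀ v : W, P v ∈ UI)
    (hPorth : ∀ v : W, ∀ z ∈ UI, A (v - P v) z = 0)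
    (E : W →ₗ[ℝ] W) (hEfix : ∀ u ∈ U, E u = u)
    (w₀ : W) (hw₀ : P w₀ = 0) :
    ∀ w ∈ U, A (w₀ - (E w₀ - P (E w₀))) (w - (E w - P (E w))) = 0 := by
  intro w hw
  rw [hEfix w hw]
  have hz : w - (w - P w) = P w := by abel
  rw [hz]
  have h1 : A (w₀ - P w₀) (P w) = 0 := hPorth w₀ (P w) (hPrange w)
  have h2 : A (E w₀ - P (E w₀)) (P w) = 0 := hPorth (E w₀) (P w) (hPrange w)
  have : w₀ - (E w₀ - P (E w₀)) = (w₀ - P w₀) - (E w₀ - P (E w₀)) := by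
    rw [hw₀]; abel
  rw [this, map_sub, LinearMap.sub_apply, h1, h2, sub_zero]
end

section
/- Let A, P, E, Π be n×n real matrices such that A is symmetric positive semidefinite, Π is symmetric with Π² = Π, P Π = 0, and for every x ∈ ℝⁿ, A Π x = 0 implies (I − E) Π x = 0. Define S = (I − P)ᵀ A (I − P). Then for every x ∈ ℝⁿ, Π S Π x = 0 implies Π (I − E)ᵀ S (I − E) Π x = 0; that is, the nullspace of Π S Π is contained in the nullspace of Π (I − E)ᵀ S (I − E) Π. -/
open Matrix

/-- The nullspace inclusion (equation (36)): with `S = (I-P)ᵀ A (I-P)`,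
`null (Π S Π) ⊆ null (Π (I-E)ᵀ S (I-E) Π)` under Assumption 7
(`A Π x = 0 ⟹ (I-E) Π x = 0`). -/
theorem stmt_11 {n : ℕ} (A P E Pr : Matrix (Fin n) (Fin n) ℝ)
    (hA : A.PosSemidef) (hPrs : Prᵀ = Pr) (hPr2 : Pr * Pr = Pr) (hPPr : P * Pr = 0)
    (hker : ∀ x : Fin n → ℝ,
      A.mulVec (Pr.mulVec x) = 0 → (1 - E).mulVec (Pr.mulVec x) = 0) :
    ∀ x : Fin n → ℝ,
      (Pr * ((1 - P)ᵀ * A * (1 - P)) * Pr).mulVec x = 0 →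
      (Pr * (1 - E)ᵀ * ((1 - P)ᵀ * A * (1 - P)) * (1 - E) * Pr).mulVec x = 0 := by
  intro x hx
  -- key: (1-P) * Pr = Pr
  have hIP : (1 - P) * Pr = Pr := by
    rw [sub_mul, one_mul, hPPr, sub_zero]
  -- A *ᵥ (Pr *ᵥ x) = 0
  have hAx : A.mulVec (Pr.mulVec x) = 0 := by
    have hquad : star (Pr.mulVec x) ⬝ᵥ A.mulVec (Pr.mulVec x) = 0 := by
      have : Pr.mulVec ((Pr * ((1 - P)ᵀ * A * (1 - P)) * Pr).mulVec x)
          = (Pr * (Pr * ((1 - P)ᵀ * A * (1 - P)) * Pr)).mulVec x := by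
        rw [mulVec_mulVec]
      have h0 : star x ⬝ᵥ (Pr * ((1 - P)ᵀ * A * (1 - P)) * Pr).mulVec x = 0 := by
        rw [hx, dotProduct_zero]
      calc star (Pr.mulVec x) ⬝ᵥ A.mulVec (Pr.mulVec x)
          = star x ⬝ᵥ (Prᵀ * A * Pr).mulVec x := by
            rw [star_trivial, star_trivial]
            conv_rhs => rw [← mulVec_mulVec, ← mulVec_mulVec, dotProduct_mulVec,
              vecMul_transpose]
        _ = star x ⬝ᵥ (Pr * ((1 - P)ᵀ * A * (1 - P)) * Pr).mulVec x := by
            congr 1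
            have : (1 - P)ᵀ * A * (1 - P) * Pr = (1 - P)ᵀ * A * Pr := by
              rw [Matrix.mul_assoc ((1 - P)ᵀ * A), hIP]
            rw [Matrix.mul_assoc Pr, this]
            have h2 : Pr * ((1 - P)ᵀ * (A * Pr)) = ((1 - P) * Pr)ᵀ * (A * Pr) := by
              rw [Matrix.transpose_mul, hPrs, Matrix.mul_assoc]
            rw [Matrix.mul_assoc, Matrix.mul_assoc] at *
            rw [h2, hIP, hPrs]
        _ = 0 := h0
    exact (hA.dotProduct_mulVec_zero_iff _).mp hquad
  have hE : ((1 - E) * Pr).mulVec x = 0 := by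
    rw [← mulVec_mulVec]; exact hker x hAx
  have : (Pr * (1 - E)ᵀ * ((1 - P)ᵀ * A * (1 - P)) * (1 - E) * Pr).mulVec x
      = (Pr * (1 - E)ᵀ * ((1 - P)ᵀ * A * (1 - P))).mulVec (((1 - E) * Pr).mulVec x) := by
    rw [mulVec_mulVec, Matrix.mul_assoc, Matrix.mul_assoc]
  rw [this, hE, mulVec_zero]
end

section
/- Let A be a symmetric n×n real matrix, let D be an m×n real matrix with D Dᵀ invertible, let Π = I − Dᵀ (D Dᵀ)⁻¹ D, and let b ∈ ℝⁿ. Then for any w ∈ ℝⁿ with D w = 0, the following are equivalent: (i) there exists λ ∈ ℝᵐ such that A w + Dᵀ λ = b; (ii) Π A Π w = Π b. -/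
open Matrix

/-- Equation (42): for `w` in the nullspace of `D`, the saddle point system
`A w + Dᵀ λ = b` is solvable iff the projected system `Π A Π w = Π b` holds,
where `Π = I - Dᵀ(DDᵀ)⁻¹D`. -/
theorem stmt_14 {m n : ℕ} (A : Matrix (Fin n) (Fin n) ℝ) (hA : A.IsSymm)
    (D : Matrix (Fin m) (Fin n) ℝ) (hD : IsUnit (D * Dᵀ))
    (b w : Fin n → ℝ) (hw : D.mulVec w = 0) :
    (∃ lam : Fin m → ℝ, A.mulVec w + Dᵀ.mulVec lam = b) ↔
    ((1 - Dᵀ * (D * Dᵀ)⁻¹ * D) * A * (1 - Dᵀ * (D * Dᵀ)⁻¹ * D)).mulVec w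
      = (1 - Dᵀ * (D * Dᵀ)⁻¹ * D).mulVec b := by
  set P : Matrix (Fin n) (Fin n) ℝ := 1 - Dᵀ * (D * Dᵀ)⁻¹ * D with hP
  have hdet : IsUnit (D * Dᵀ).det := (Matrix.isUnit_iff_isUnit_det _).mp hD
  have hkey : Dᵀ * (D * Dᵀ)⁻¹ * D * Dᵀ = Dᵀ := by
    rw [Matrix.mul_assoc _ D Dᵀ, Matrix.mul_assoc, Matrix.nonsing_inv_mul _ hdet,
      Matrix.mul_one]
  have hPDt : P * Dᵀ = 0 := by
    rw [hP, Matrix.sub_mul, Matrix.one_mul, hkey, sub_self]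
  have hPw : P.mulVec w = w := by
    rw [hP, sub_mulVec, one_mulVec, ← mulVec_mulVec, hw, mulVec_zero, sub_zero]
  constructor
  · rintro ⟨lam, hlam⟩
    have h2 := congrArg (P.mulVec ·) hlam
    simp only [mulVec_add, mulVec_mulVec, hPDt, zero_mulVec, add_zero] at h2
    rw [← mulVec_mulVec (M := P * A) (N := P), hPw, ← mulVec_mulVec]
    simpa using h2
  · intro h
    rw [← mulVec_mulVec (M := P * A) (N := P), hPw, ← mulVec_mulVec] at h
    have hPr : P.mulVec (A.mulVec w - b) = 0 := by
      rw [mulVec_sub, h, sub_self]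
    have hthis : A.mulVec w - b = (Dᵀ * (D * Dᵀ)⁻¹ * D).mulVec (A.mulVec w - b) := by
      rw [hP, sub_mulVec, one_mulVec, sub_eq_zero] at hPr
      exact hPr
    refine ⟨-(((D * Dᵀ)⁻¹ * D).mulVec (A.mulVec w - b)), ?_⟩
    rw [mulVec_neg, mulVec_mulVec, ← Matrix.mul_assoc, ← hthis]
    abel
end

section
/- Let A be an n×n symmetric real matrix, let Π be an n×n real matrix with Π² = Π and Πᵀ = Π, let t > 0, and let b ∈ ℝⁿ. Then for every w ∈ ℝⁿ, the equation (Π A Π + t (I − Π)) w = Π b holds if and only if Π w = w and Π A Π w = Π b. -/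
open Matrix

/-- Equivalence of the regularized system (43) and the projected singular
system (42): `(Π A Π + t(I - Π)) w = Π b` iff `Π w = w` and `Π A Π w = Π b`. -/
theorem stmt_16 {n : ℕ} (A Pr : Matrix (Fin n) (Fin n) ℝ)
    (hA : A.IsSymm) (hPr2 : Pr * Pr = Pr) (hPrs : Prᵀ = Pr)
    (t : ℝ) (ht : 0 < t) (b : Fin n → ℝ) :
    ∀ w : Fin n → ℝ,
      (Pr * A * Pr + t • (1 - Pr)).mulVec w = Pr.mulVec b ↔
      (Pr.mulVec w = w ∧ (Pr * A * Pr).mulVec w = Pr.mulVec b) := by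
  intro w
  constructor
  · intro h
    -- multiply both sides by Pr
    have h2 : Pr.mulVec ((Pr * A * Pr + t • (1 - Pr)).mulVec w)
        = Pr.mulVec (Pr.mulVec b) := by rw [h]
    have key : (Pr * A * Pr).mulVec w = Pr.mulVec b := by
      have : Pr * (Pr * A * Pr + t • (1 - Pr)) = Pr * A * Pr := by
        rw [Matrix.mul_add, Matrix.mul_smul, Matrix.mul_sub, Matrix.mul_one]
        simp only [← mul_assoc, hPr2, sub_self, smul_zero, add_zero]
      calc (Pr * A * Pr).mulVec w
          = (Pr * (Pr * A * Pr + t • (1 - Pr))).mulVec w := by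
            rw [this]
        _ = Pr.mulVec ((Pr * A * Pr + t • (1 - Pr)).mulVec w) := by
            rw [Matrix.mulVec_mulVec]
        _ = Pr.mulVec (Pr.mulVec b) := h2
        _ = Pr.mulVec b := by rw [Matrix.mulVec_mulVec, hPr2]
    refine ⟨?_, key⟩
    -- subtract: t • (1 - Pr) w = 0
    have h3 : (t • ((1 : Matrix (Fin n) (Fin n) ℝ) - Pr)).mulVec w = 0 := by
      have := h
      rw [Matrix.add_mulVec, key] at this
      have := add_left_cancel (a := Pr.mulVec b)
        (by rw [this, add_zero] : Pr.mulVec b + (t • ((1:Matrix (Fin n) (Fin n) ℝ) - Pr)).mulVec w = Pr.mulVec b + 0)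
      exact this
    have h4 : ((1 : Matrix (Fin n) (Fin n) ℝ) - Pr).mulVec w = 0 := by
      rw [Matrix.smul_mulVec] at h3
      exact (smul_eq_zero.mp h3).resolve_left (ne_of_gt ht)
    rw [Matrix.sub_mulVec, Matrix.one_mulVec, sub_eq_zero] at h4
    exact h4.symm
  · rintro ⟨hw, hb⟩
    rw [Matrix.add_mulVec, hb, Matrix.smul_mulVec, Matrix.sub_mulVec,
      Matrix.one_mulVec, hw, sub_self, smul_zero, add_zero]
end
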